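/- Let E, F be rank-one effects on a Hilbert space H whose ranges are different one-dimensional subspaces. Then E and F are coexistent if and only if E + F ≤ I. -/

import Mathlib

variable {H : Type*} [NormedAddCommGroup H] [InnerProductSpace ℂ H] [CompleteSpace H]

open RCLike ContinuousLinearMap
open scoped InnerProductSpace

lemma pos_apply_eq_zero {C : H →L[ℂ] H} (hC : C.IsPositive) {x : H}
    (hx : re ⟪C x, x⟫_ℂ = 0) : C x = 0 := by
  have hsymm := (isSelfAdjoint_iff_isSymmetric).mp hC.isSelfAdjoint
  have key : ∀ y : H, re ⟪C x, y⟫_ℂ = 0 := by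
    intro y
    set a := re ⟪C x, y⟫_ℂ with ha
    set b := re ⟪C y, y⟫_ℂ with hb
    have hb0 : 0 ≤ b := hC.re_inner_nonneg_left y
    have hsym2 : re ⟪C y, x⟫_ℂ = a := by
      have h1 := hsymm y x
      simp only [ContinuousLinearMap.coe_coe] at h1
      rw [h1, inner_re_symm]
    have hq : ∀ t : ℝ, 0 ≤ 2 * t * a + t ^ 2 * b := by
      intro t
      have h0 := hC.re_inner_nonneg_left (x + (t : ℂ) • y)
      have expand : ⟪C (x + (t : ℂ) • y), x + (t : ℂ) • y⟫_ℂ =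
          ⟪C x, x⟫_ℂ + (t : ℂ) * ⟪C x, y⟫_ℂ + (t : ℂ) * ⟪C y, x⟫_ℂ
            + ((t * t : ℝ) : ℂ) * ⟪C y, y⟫_ℂ := by
        rw [map_add, map_smul]
        simp only [inner_add_left, inner_add_right, inner_smul_left, inner_smul_right,
          Complex.conj_ofReal]
        push_cast
        ring
      rw [expand] at h0
      simp only [RCLike.re_to_complex] at h0 hx hsym2 ha hb
      simp only [Complex.add_re, Complex.re_ofReal_mul] at h0
      rw [hx, hsym2] at h0
      rw [← ha, ← hb] at h0
      nlinarith [h0]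
    rcases hb0.eq_or_lt with hbe | hbl
    · have h1 := hq 1
      have h2 := hq (-1)
      rw [← hbe] at h1 h2
      simp at h1 h2
      linarith
    · have h := hq (-(a / b))
      have heq : 2 * (-(a / b)) * a + (-(a / b)) ^ 2 * b = -(a ^ 2 / b) := by
        field_simp
        ring
      rw [heq] at h
      have h3 : a ^ 2 / b * b ≤ 0 :=
        mul_nonpos_of_nonpos_of_nonneg (by linarith) hbl.le
      rw [div_mul_cancel₀ _ (ne_of_gt hbl)] at h3
      have : a ^ 2 = 0 := le_antisymm h3 (sq_nonneg a)
      exact (pow_eq_zero_iff two_ne_zero).mp this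
  have h := key (C x)
  rw [inner_self_eq_norm_sq] at h
  have : ‖C x‖ = 0 := by nlinarith [norm_nonneg (C x)]
  simpa using this

lemma range_le_of_pos_le {C E : H →L[ℂ] H} (hC : C.IsPositive) (hE : E.IsPositive)
    (hle : (E - C).IsPositive) [FiniteDimensional ℂ (LinearMap.range (E : H →ₗ[ℂ] H))] :
    LinearMap.range (C : H →ₗ[ℂ] H) ≤ LinearMap.range (E : H →ₗ[ℂ] H) := by
  set K := LinearMap.range (E : H →ₗ[ℂ] H) with hK
  have hEsymm := (isSelfAdjoint_iff_isSymmetric).mp hE.isSelfAdjoint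
  have hCsymm := (isSelfAdjoint_iff_isSymmetric).mp hC.isSelfAdjoint
  -- every b ⊥ K is killed by E, hence by C
  have hEb : ∀ b ∈ Kᗮ, E b = 0 := by
    intro b hb
    have h1 : ⟪E (E b), b⟫_ℂ = 0 := by
      have : E (E b) ∈ K := ⟨E b, rfl⟩
      exact (Submodule.mem_orthogonal K b).mp hb _ this
    have h2 : ⟪E b, E b⟫_ℂ = 0 := by
      have := hEsymm (E b) b
      simp only [ContinuousLinearMap.coe_coe] at this
      rw [← this, h1]
    simpa using h2
  have hCb : ∀ b ∈ Kᗮ, C b = 0 := by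
    intro b hb
    apply pos_apply_eq_zero hC
    have h1 : 0 ≤ RCLike.re ⟪C b, b⟫_ℂ := hC.re_inner_nonneg_left b
    have h2 := hle.re_inner_nonneg_left b
    have h3 : RCLike.re ⟪E b, b⟫_ℂ = 0 := by rw [hEb b hb]; simp
    simp only [ContinuousLinearMap.sub_apply, inner_sub_left, map_sub] at h2
    rw [h3] at h2
    linarith
  intro v hv
  obtain ⟨x, rfl⟩ := hv
  simp only [ContinuousLinearMap.coe_coe]
  have : C x ∈ Kᗮᗮ := by
    rw [Submodule.mem_orthogonal]
    intro b hb
    have := hCsymm x b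
    simp only [ContinuousLinearMap.coe_coe] at this
    rw [← inner_conj_symm, this, hCb b hb, inner_zero_right, map_zero]
  rwa [Submodule.orthogonal_orthogonal] at this

/-- An effect on a Hilbert space: a positive operator bounded above by the identity. -/
def IsEffect (A : H →L[ℂ] H) : Prop := A.IsPositive ∧ (1 - A).IsPositive

/-- Coexistence of two effects. -/
def Coexistent (E F : H →L[ℂ] H) : Prop :=
  ∃ A B C : H →L[ℂ] H, IsEffect A ∧ IsEffect B ∧ IsEffect C ∧
    E = A + C ∧ F = B + C ∧ (1 - (A + B + C)).IsPositive

/-- Rank-one effects with different ranges are coexistent iff `E + F ≤ I`. -/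
theorem rankOne_coexistent_iff (E F : H →L[ℂ] H) (hE : IsEffect E) (hF : IsEffect F)
    (hrE : Module.finrank ℂ (LinearMap.range (E : H →ₗ[ℂ] H)) = 1)
    (hrF : Module.finrank ℂ (LinearMap.range (F : H →ₗ[ℂ] H)) = 1)
    (hne : LinearMap.range (E : H →ₗ[ℂ] H) ≠ LinearMap.range (F : H →ₗ[ℂ] H)) :
    Coexistent E F ↔ (1 - (E + F)).IsPositive := by
  constructor
  · rintro ⟨A, B, C, hA, hB, hC, hEe, hFe, hIp⟩
    haveI : FiniteDimensional ℂ (LinearMap.range (E : H →ₗ[ℂ] H)) :=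
      FiniteDimensional.of_finrank_pos (by rw [hrE]; norm_num)
    haveI : FiniteDimensional ℂ (LinearMap.range (F : H →ₗ[ℂ] H)) :=
      FiniteDimensional.of_finrank_pos (by rw [hrF]; norm_num)
    have hEC : (E - C).IsPositive := by
      have : E - C = A := by rw [hEe]; abel
      rw [this]; exact hA.1
    have hFC : (F - C).IsPositive := by
      have : F - C = B := by rw [hFe]; abel
      rw [this]; exact hB.1
    have hCE := range_le_of_pos_le hC.1 hE.1 hEC
    have hCF := range_le_of_pos_le hC.1 hF.1 hFC
    have hbot : LinearMap.range (E : H →ₗ[ℂ] H) ⊓ LinearMap.range (F : H →ₗ[ℂ] H) = ⊥ := by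
      by_contra hne2
      obtain ⟨x, hx, hx0⟩ := Submodule.exists_mem_ne_zero_of_ne_bot hne2
      have hspE : (ℂ ∙ x) = LinearMap.range (E : H →ₗ[ℂ] H) :=
        Submodule.eq_of_le_of_finrank_le
          ((Submodule.span_singleton_le_iff_mem x _).mpr hx.1)
          (by rw [hrE, finrank_span_singleton hx0])
      have hspF : (ℂ ∙ x) = LinearMap.range (F : H →ₗ[ℂ] H) :=
        Submodule.eq_of_le_of_finrank_le
          ((Submodule.span_singleton_le_iff_mem x _).mpr hx.2)
          (by rw [hrF, finrank_span_singleton hx0])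
      exact hne (hspE ▸ hspF)
    have hC0 : C = 0 := by
      ext x
      have : (C : H →ₗ[ℂ] H) x ∈ (⊥ : Submodule ℂ H) := by
        rw [← hbot]
        exact ⟨hCE ⟨x, rfl⟩, hCF ⟨x, rfl⟩⟩
      simpa using this
    have heq : A + B + C = E + F := by rw [hEe, hFe, hC0]; abel
    rwa [← heq]
  · intro h
    refine ⟨E, F, 0, hE, hF, ⟨ContinuousLinearMap.isPositive_zero, by
      simpa using ContinuousLinearMap.isPositive_one⟩, by simp, by simp, by simpa using h⟩
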